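/- Assume the closures of F(w) and F(w') are disjoint for all distinct words w, w' of equal length. Then the similarity map φ is topologically transitive on 𝓕: there exists a point x ∈ 𝓕 whose forward orbit {φⁿ(x) : n ∈ ℕ} is dense in 𝓕. -/

import Mathlib

open Filter Set Metric Topology

/-- The length-`n` prefix word `(i 0, i 1, ..., i (n-1))` of an infinite sequence `i`. -/
def wordPrefix {m : ℕ} (i : ℕ → Fin m) (n : ℕ) : List (Fin m) :=
  (List.range n).map i

/-- Padded segment: the `k`-th word plus a sentinel, so that it is nonempty. -/
def AFseg {m : ℕ} (d : Fin m) (e : ℕ → List (Fin m)) (k : ℕ) : List (Fin m) :=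
  e k ++ [d]

/-- Concatenation of the first `K` padded segments. -/
def AFjoin {m : ℕ} (d : Fin m) (e : ℕ → List (Fin m)) (K : ℕ) : List (Fin m) :=
  ((List.range K).map (AFseg d e)).flatten

lemma AFjoin_succ {m : ℕ} (d : Fin m) (e : ℕ → List (Fin m)) (K : ℕ) :
    AFjoin d e (K + 1) = AFjoin d e K ++ AFseg d e K := by
  simp [AFjoin, List.range_succ]

lemma AFjoin_len {m : ℕ} (d : Fin m) (e : ℕ → List (Fin m)) (K : ℕ) :
    K ≤ (AFjoin d e K).length := by
  induction K with
  | zero => simp [AFjoin]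
  | succ K ih =>
    rw [AFjoin_succ, List.length_append]
    have : 1 ≤ (AFseg d e K).length := by simp [AFseg]
    omega

lemma AFjoin_prefix {m : ℕ} (d : Fin m) (e : ℕ → List (Fin m)) {K K' : ℕ} (h : K ≤ K') :
    AFjoin d e K <+: AFjoin d e K' := by
  induction K' with
  | zero => simp_all
  | succ K' ih =>
    rcases Nat.lt_or_ge K (K' + 1) with h' | h'
    · exact (ih (by omega)).trans (by rw [AFjoin_succ]; exact List.prefix_append _ _)
    · have : K = K' + 1 := by omega
      subst this; exact List.prefix_refl _

/-- The infinite concatenation of all segments. -/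
def AFi {m : ℕ} (d : Fin m) (e : ℕ → List (Fin m)) (n : ℕ) : Fin m :=
  (AFjoin d e (n + 1)).getD n d

lemma AFi_eq {m : ℕ} (d : Fin m) (e : ℕ → List (Fin m)) {K n : ℕ}
    (h : n < (AFjoin d e K).length) : AFi d e n = (AFjoin d e K).getD n d := by
  have hn : n < (AFjoin d e (n + 1)).length := lt_of_lt_of_le (Nat.lt_succ_self n) (AFjoin_len d e _)
  rcases Nat.le_total K (n + 1) with hK | hK
  · obtain ⟨t, ht⟩ := AFjoin_prefix d e hK
    rw [AFi, ← ht, List.getD_eq_getElem _ _ h,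
      List.getD_eq_getElem _ _ (by rw [ht]; exact hn), List.getElem_append_left h]
  · obtain ⟨t, ht⟩ := AFjoin_prefix d e hK
    rw [AFi, ← ht, List.getD_eq_getElem _ _ hn,
      List.getD_eq_getElem _ _ (by rw [ht]; exact h), List.getElem_append_left hn]

/-- The letters of `AFi` inside the `k`-th segment agree with that segment. -/
lemma AFi_seg {m : ℕ} (d : Fin m) (e : ℕ → List (Fin m)) (k t : ℕ)
    (ht : t < (AFseg d e k).length) :
    AFi d e ((AFjoin d e k).length + t) = (AFseg d e k).getD t d := by
  have hlen : ((AFjoin d e k).length + t) < (AFjoin d e k ++ AFseg d e k).length := by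
    rw [List.length_append]; omega
  have hlen' : ((AFjoin d e k).length + t) < (AFjoin d e (k + 1)).length := by
    rw [AFjoin_succ]; exact hlen
  rw [AFi_eq d e hlen', AFjoin_succ, List.getD_eq_getElem _ _ hlen,
    List.getD_eq_getElem _ _ ht, List.getElem_append_right (by omega)]
  congr 1
  omega

/-- The similarity map `φ` is topologically transitive on the abstract fractal: some point has
dense forward orbit. -/
theorem abstract_fractal_similarity_map_transitive
    {X : Type*} [MetricSpace X] [CompactSpace X] {m : ℕ} (hm : 2 ≤ m)
    (F : List (Fin m) → Set X)
    (hne : ∀ w : List (Fin m), (F w).Nonempty)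
    (hnest : ∀ (w : List (Fin m)) (j : Fin m), F (w ++ [j]) ⊆ F w)
    (hdiam : Tendsto
      (fun n => ⨆ w : {w : List (Fin m) // w.length = n}, Metric.diam (F w.1))
      atTop (𝓝 0))
    (π : (ℕ → Fin m) → X)
    (hπ : ∀ i : ℕ → Fin m, (⋂ n : ℕ, closure (F (wordPrefix i n))) = {π i})
    (hdisj : ∀ w w' : List (Fin m), w.length = w'.length → w ≠ w' →
      Disjoint (closure (F w)) (closure (F w')))
    (φ : Set.range π → Set.range π)
    (hφ : ∀ i : ℕ → Fin m,
      (φ ⟨π i, Set.mem_range_self i⟩ : X) = π (fun n => i (n + 1))) :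
    ∃ x : Set.range π, Dense (Set.range fun n : ℕ => φ^[n] x) := by
  haveI : NeZero m := ⟨by omega⟩
  obtain ⟨e, he⟩ := exists_surjective_nat (List (Fin m))
  set d : Fin m := 0 with hd
  set i : ℕ → Fin m := AFi d e with hi
  -- the point in each cylinder it codes
  have hmem : ∀ i' : ℕ → Fin m, ∀ n : ℕ, π i' ∈ closure (F (wordPrefix i' n)) := by
    intro i' n
    have : π i' ∈ ⋂ n : ℕ, closure (F (wordPrefix i' n)) := by
      rw [hπ i']; exact mem_singleton _
    exact mem_iInter.mp this n
  -- iterates of φ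
  have hiter : ∀ (s : ℕ) (i' : ℕ → Fin m),
      φ^[s] ⟨π i', Set.mem_range_self i'⟩ = ⟨π (fun n => i' (n + s)), Set.mem_range_self _⟩ := by
    intro s
    induction s with
    | zero => intro i'; simp
    | succ s ih =>
      intro i'
      rw [Function.iterate_succ_apply]
      have h1 : φ ⟨π i', Set.mem_range_self i'⟩
          = ⟨π (fun n => i' (n + 1)), Set.mem_range_self _⟩ := Subtype.ext (hφ i')
      rw [h1, ih (fun n => i' (n + 1))]
      exact Subtype.ext rfl
  refine ⟨⟨π i, Set.mem_range_self i⟩, ?_⟩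
  rw [show (Set.range fun n : ℕ => φ^[n] ⟨π i, Set.mem_range_self i⟩)
      = Set.range (fun n : ℕ => φ^[n] ⟨π i, Set.mem_range_self i⟩) from rfl]
  change DenseRange _
  rw [denseRange_iff]
  rintro ⟨y, j, rfl⟩ ε hε
  -- choose a level where diameters are small
  obtain ⟨N, hN⟩ : ∃ N, (⨆ w : {w : List (Fin m) // w.length = N}, Metric.diam (F w.1)) < ε :=
    (hdiam.eventually (gt_mem_nhds hε)).exists
  set w : List (Fin m) := wordPrefix j N with hw
  have hwlen : w.length = N := by simp [hw, wordPrefix]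
  obtain ⟨k, hk⟩ := he w
  set s : ℕ := (AFjoin d e k).length with hs
  refine ⟨s, ?_⟩
  rw [hiter s i]
  rw [Subtype.dist_eq]
  show dist (π j) (π (fun n => i (n + s))) < ε
  -- prefix of the shifted sequence is w
  have hpre : wordPrefix (fun n => i (n + s)) N = w := by
    apply List.ext_getElem
    · simp [wordPrefix, hwlen]
    · intro t h1 h2
      simp only [wordPrefix, List.getElem_map, List.getElem_range]
      have ht : t < (AFseg d e k).length := by
        simp only [AFseg, List.length_append, List.length_singleton, hk]
        omega
      have hseg := AFi_seg d e k t ht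
      rw [show t + s = (AFjoin d e k).length + t by rw [hs, Nat.add_comm], hi, hseg,
        AFseg, hk, List.getD_eq_getElem _ _ (by rw [List.length_append]; simp; omega),
        List.getElem_append_left h2]
  have h1 : π (fun n => i (n + s)) ∈ closure (F w) := by
    rw [← hpre]; exact hmem _ N
  have h2 : π j ∈ closure (F w) := hmem j N
  have hbdd : Bornology.IsBounded (closure (F w)) :=
    Bornology.IsBounded.subset isCompact_univ.isBounded (subset_univ _)
  have hdist : dist (π j) (π (fun n => i (n + s))) ≤ Metric.diam (F w) := by
    have := Metric.dist_le_diam_of_mem hbdd h2 h1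
    rwa [Metric.diam_closure] at this
  refine lt_of_le_of_lt (hdist.trans ?_) hN
  have hBdd : BddAbove (Set.range fun w' : {w : List (Fin m) // w.length = N}
      => Metric.diam (F w'.1)) := by
    refine ⟨Metric.diam (Set.univ : Set X), ?_⟩
    rintro _ ⟨w', rfl⟩
    exact Metric.diam_mono (subset_univ _) isCompact_univ.isBounded
  exact le_ciSup hBdd ⟨w, hwlen⟩
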